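/- Let M be a graded R-module, S a multiplicatively closed subset of the homogeneous elements of R, and N a graded R-submodule of M with S^{-1}N ≠ 0. If N is a graded 2-absorbing coprimary R-submodule of M, then S^{-1}N is a graded 2-absorbing coprimary S^{-1}R-submodule of S^{-1}M. -/

import Mathlib

open DirectSum Pointwise

variable {G : Type} [AddGroup G] [DecidableEq G]
variable {R : Type} [CommRing R] (𝒜 : G → AddSubgroup R) [GradedRing 𝒜]
variable {M : Type} [AddCommGroup M] [Module R M] (ℳ : G → AddSubgroup M)
  [SetLike.GradedSMul 𝒜 ℳ] [DirectSum.Decomposition ℳ]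

/-- A submodule is graded if it contains every homogeneous component of each of
its elements. -/
def IsGradedSubmodule (N : Submodule R M) : Prop :=
  ∀ (g : G) (m : M), m ∈ N → (DirectSum.decompose ℳ m g : M) ∈ N

/-- The graded radical of an ideal: all `r` such that for each `g` some positive
power of the degree-`g` component of `r` lies in `P`. -/
def gradRad (P : Ideal R) : Set R :=
  {r : R | ∀ g : G, ∃ n : ℕ, 0 < n ∧ ((DirectSum.decompose 𝒜 r g : R)) ^ n ∈ P}

/-- Graded 2-absorbing coprimary submodule. -/
def IsGr2AbsCoprimary (N : Submodule R M) : Prop :=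
  N ≠ ⊥ ∧ IsGradedSubmodule ℳ N ∧
  ∀ x y : R, (∃ g, x ∈ 𝒜 g) → (∃ g, y ∈ 𝒜 g) →
    ∀ K : Submodule R M, IsGradedSubmodule ℳ K →
      (∀ m ∈ N, (x * y) • m ∈ K) →
      x ∈ gradRad 𝒜 (K.colon N) ∨ y ∈ gradRad 𝒜 (K.colon N) ∨ x * y ∈ N.annihilator

/-- Graded 2-absorbing primary ideal. -/
def IsGr2AbsPrimaryIdeal (P : Ideal R) : Prop :=
  P ≠ ⊤ ∧ (∀ (g : G) (r : R), r ∈ P → (DirectSum.decompose 𝒜 r g : R) ∈ P) ∧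
  ∀ a b c : R, (∃ g, a ∈ 𝒜 g) → (∃ g, b ∈ 𝒜 g) → (∃ g, c ∈ 𝒜 g) →
    a * b * c ∈ P → a * b ∈ P ∨ a * c ∈ gradRad 𝒜 P ∨ b * c ∈ gradRad 𝒜 P

lemma aux_mk_add_same {S : Submonoid R} (m m' : M) (s : S) :
    LocalizedModule.mk (m + m') s = LocalizedModule.mk m s + LocalizedModule.mk m' s := by
  rw [LocalizedModule.mk_add_mk, ← smul_add, ← LocalizedModule.mk_cancel_common_left s s]

set_option linter.unusedSectionVars false in
lemma aux_decompose_mk (S : Submonoid R)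
    (ℳ' : G → AddSubgroup (LocalizedModule S M)) [DirectSum.Decomposition ℳ']
    (hℳ' : ∀ (g : G) (x : LocalizedModule S M), x ∈ ℳ' g ↔
      ∃ (h : G) (m : M) (s : S), m ∈ ℳ h ∧ (s : R) ∈ 𝒜 (h - g) ∧ x = LocalizedModule.mk m s)
    (s : S) (d : G) (hs : (s : R) ∈ 𝒜 d) (m : M) (g : G) :
    (DirectSum.decompose ℳ' (LocalizedModule.mk m s) g : LocalizedModule S M)
      = LocalizedModule.mk ((DirectSum.decompose ℳ m (d + g) : M)) s := by
  induction m using DirectSum.Decomposition.inductionOn ℳ with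
  | zero => simp [LocalizedModule.zero_mk]
  | @homogeneous h m =>
    have hmem : LocalizedModule.mk (m : M) s ∈ ℳ' (-d + h) := by
      rw [hℳ']
      refine ⟨h, m, s, m.2, ?_, rfl⟩
      have : h - (-d + h) = d := by
        rw [sub_eq_add_neg, neg_add_rev, neg_neg, ← add_assoc]
        simp
      rwa [this]
    by_cases hg : g = -d + h
    · subst hg
      rw [DirectSum.decompose_of_mem_same ℳ' hmem]
      rw [add_neg_cancel_left, DirectSum.decompose_coe, DirectSum.of_eq_same]
    · rw [DirectSum.decompose_of_mem_ne ℳ' hmem (Ne.symm hg)]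
      have : h ≠ d + g := by
        intro hh
        exact hg (by rw [hh, neg_add_cancel_left])
      rw [DirectSum.decompose_coe, DirectSum.of_eq_of_ne _ _ _ this.symm,
        ZeroMemClass.coe_zero, LocalizedModule.zero_mk]
  | add m m' hm hm' =>
    rw [aux_mk_add_same, DirectSum.decompose_add, DirectSum.add_apply, AddSubgroup.coe_add,
      hm, hm', DirectSum.decompose_add, DirectSum.add_apply, AddSubgroup.coe_add, aux_mk_add_same]

theorem stmt_7 (S : Submonoid R) (hS : ∀ s ∈ S, ∃ g, s ∈ 𝒜 g)
    (𝒜' : G → AddSubgroup (Localization S)) [GradedRing 𝒜']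
    (h𝒜' : ∀ (g : G) (x : Localization S), x ∈ 𝒜' g ↔
      ∃ (h : G) (a : R) (s : S), a ∈ 𝒜 h ∧ (s : R) ∈ 𝒜 (h - g) ∧ x = Localization.mk a s)
    (ℳ' : G → AddSubgroup (LocalizedModule S M))
    [SetLike.GradedSMul 𝒜' ℳ'] [DirectSum.Decomposition ℳ']
    (hℳ' : ∀ (g : G) (x : LocalizedModule S M), x ∈ ℳ' g ↔
      ∃ (h : G) (m : M) (s : S), m ∈ ℳ h ∧ (s : R) ∈ 𝒜 (h - g) ∧ x = LocalizedModule.mk m s)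
    (N : Submodule R M) (hN : IsGr2AbsCoprimary 𝒜 ℳ N)
    (hne : N.localized S ≠ ⊥) :
    IsGr2AbsCoprimary 𝒜' ℳ' (N.localized S) := by
  obtain ⟨hNbot, hNgr, hNmain⟩ := hN
  refine ⟨hne, ?_, ?_⟩
  · intro g z hz
    obtain ⟨m, hm, u, rfl⟩ := (Submodule.mem_localized' _ _ _ _ _).mp hz
    obtain ⟨d, hd⟩ := hS u u.2
    rw [← IsLocalizedModule.mk_eq_mk', aux_decompose_mk 𝒜 ℳ S ℳ' hℳ' u d hd m g]
    exact (Submodule.mem_localized' _ _ _ _ _).mpr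
      ⟨_, hNgr _ _ hm, u, (IsLocalizedModule.mk_eq_mk' _ _).symm⟩
  · intro x y hx hy K hK hxyN
    obtain ⟨gx, hxg⟩ := hx
    obtain ⟨gy, hyg⟩ := hy
    obtain ⟨ha', a, s, haa, hsa, rfl⟩ := (h𝒜' gx x).mp hxg
    obtain ⟨hb', b, t, hbb, htb, rfl⟩ := (h𝒜' gy y).mp hyg
    set K₀ : Submodule R M :=
      (K.restrictScalars R).comap (LocalizedModule.mkLinearMap S M) with hK₀def
    have memK₀ : ∀ m : M, m ∈ K₀ ↔ LocalizedModule.mk m 1 ∈ K := by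
      intro m
      simp [hK₀def, Submodule.mem_comap, LocalizedModule.mkLinearMap_apply]
    have h1mem : ((1 : S) : R) ∈ 𝒜 0 := by
      simpa using SetLike.one_mem_graded 𝒜
    have hK₀gr : IsGradedSubmodule ℳ K₀ := by
      intro g m hm
      rw [memK₀] at hm ⊢
      have := hK g (LocalizedModule.mk m 1) hm
      rwa [aux_decompose_mk 𝒜 ℳ S ℳ' hℳ' 1 0 h1mem m g, zero_add] at this
    have habK : ∀ m ∈ N, (a * b) • m ∈ K₀ := by
      intro m hm
      have hmloc : LocalizedModule.mk m 1 ∈ N.localized S :=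
        (Submodule.mem_localized' _ _ _ _ _).mpr
          ⟨m, hm, 1, (IsLocalizedModule.mk_eq_mk' _ _).symm⟩
      have h2 := hxyN _ hmloc
      rw [Localization.mk_mul, LocalizedModule.mk_smul_mk] at h2
      rw [memK₀]
      have h3 : (Localization.mk ((s * t * 1 : S) : R) 1 : Localization S) •
          LocalizedModule.mk ((a * b) • m) (s * t * 1) =
          LocalizedModule.mk ((a * b) • m) 1 := by
        rw [LocalizedModule.mk_smul_mk, one_mul, ← Submonoid.smul_def,
          LocalizedModule.mk_cancel]
      rw [← h3]
      exact K.smul_mem _ h2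
    have transfer : ∀ (c : R) (u : S) (gc gu : G), c ∈ 𝒜 gc →
        Localization.mk c u ∈ 𝒜' gu → c ∈ gradRad 𝒜 (K₀.colon N) →
        Localization.mk c u ∈ gradRad 𝒜' (K.colon (N.localized S)) := by
      intro c u gc gu hc hcu hrad
      intro g
      by_cases hg : g = gu
      · subst hg
        rw [DirectSum.decompose_of_mem_same 𝒜' hcu]
        obtain ⟨n, hn, hpow⟩ := hrad gc
        rw [DirectSum.decompose_of_mem_same 𝒜 hc] at hpow
        refine ⟨n, hn, ?_⟩
        rw [Submodule.mem_colon]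
        intro p hp
        obtain ⟨m, hm, v, rfl⟩ := (Submodule.mem_localized' _ _ _ _ _).mp hp
        rw [← IsLocalizedModule.mk_eq_mk', Localization.mk_pow, LocalizedModule.mk_smul_mk]
        have h4 : c ^ n • m ∈ K₀ := Submodule.mem_colon.mp hpow m hm
        rw [memK₀] at h4
        have h5 : LocalizedModule.mk (c ^ n • m) (u ^ n * v) =
            (Localization.mk 1 (u ^ n * v) : Localization S) • LocalizedModule.mk (c ^ n • m) 1 := by
          rw [LocalizedModule.mk_smul_mk, one_smul, mul_one]
        rw [h5]
        exact K.smul_mem _ h4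
      · rw [DirectSum.decompose_of_mem_ne 𝒜' hcu (Ne.symm hg)]
        exact ⟨1, one_pos, by simpa using (Submodule.colon K (N.localized S)).zero_mem⟩
    rcases hNmain a b ⟨ha', haa⟩ ⟨hb', hbb⟩ K₀ hK₀gr habK with hca | hcb | hcab
    · exact Or.inl (transfer a s ha' gx haa hxg hca)
    · exact Or.inr (Or.inl (transfer b t hb' gy hbb hyg hcb))
    · refine Or.inr (Or.inr ?_)
      rw [Submodule.mem_annihilator]
      intro z hz
      obtain ⟨m, hm, v, rfl⟩ := (Submodule.mem_localized' _ _ _ _ _).mp hz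
      rw [← IsLocalizedModule.mk_eq_mk', Localization.mk_mul, LocalizedModule.mk_smul_mk,
        Submodule.mem_annihilator.mp hcab m hm, LocalizedModule.zero_mk]
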